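/- Fix h ∈ ℕ. The collection of all h-flipclasses of all symmetric groups 𝔖_n (n ranging over the positive integers) has only finitely many isomorphism classes. -/

import Mathlib

open MvPolynomial

/-- The symmetric group `𝔖ₙ`, realized as permutations of `Fin n`. -/
abbrev Pm (n : ℕ) := Equiv.Perm (Fin n)

/-- The Coxeter length of a permutation: its number of inversions. -/
def len {n : ℕ} (w : Pm n) : ℕ :=
  (Finset.univ.filter fun q : Fin n × Fin n => q.1 < q.2 ∧ w q.2 < w q.1).card

/-- Edges of the Bruhat graph `B(𝔖ₙ)`: `a → b` iff `b * a⁻¹` is a transposition and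
`ℓ(a) < ℓ(b)`.  The label of the edge is `b * a⁻¹`. -/
def BEdge {n : ℕ} (a b : Pm n) : Prop :=
  (b * a⁻¹).IsSwap ∧ len a < len b

/-- Bruhat order: `u ≤ v` iff there is a directed path from `u` to `v` in the Bruhat graph. -/
def bruhatLE {n : ℕ} : Pm n → Pm n → Prop := Relation.ReflTransGen BEdge

/-- Strict Bruhat order. -/
def bruhatLT {n : ℕ} (a b : Pm n) : Prop := bruhatLE a b ∧ a ≠ b

/-- Covering relation of Bruhat order. -/
def bruhatCov {n : ℕ} (a b : Pm n) : Prop :=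
  bruhatLT a b ∧ ∀ z, bruhatLT a z → bruhatLT z b → False

/-- A path of length `h` from `u` to `v` in the Bruhat graph, encoded as a function
`ℕ → 𝔖ₙ` normalized to be constantly `v` from time `h` on. -/
def IsPath (n h : ℕ) (u v : Pm n) (p : ℕ → Pm n) : Prop :=
  p 0 = u ∧ (∀ j, h ≤ j → p j = v) ∧ ∀ i, i < h → BEdge (p i) (p (i + 1))

/-- The `i`-th label (`0 ≤ i ≤ h-1`) of a path. -/
def lab {n : ℕ} (p : ℕ → Pm n) (i : ℕ) : Pm n := p (i + 1) * (p i)⁻¹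

/-- `q` is obtained from `p` by the `i`-th flip (`1 ≤ i ≤ h-1`): they differ exactly at
position `i`. -/
def FlipAt {n : ℕ} (h i : ℕ) (p q : ℕ → Pm n) : Prop :=
  0 < i ∧ i < h ∧ p i ≠ q i ∧ ∀ j, j ≠ i → p j = q j

/-- One application of a flip operator on paths of length `h` from `u` to `v`. -/
def FlipStep (n h : ℕ) (u v : Pm n) (p q : ℕ → Pm n) : Prop :=
  IsPath n h u v p ∧ IsPath n h u v q ∧ ∃ i, FlipAt h i p q

/-- `F` is an `h`-flipclass of paths from `u` to `v`: an orbit of the group generated by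
the flip operators, i.e. a connected component under single flips. -/
def IsFlipclass (n h : ℕ) (u v : Pm n) (F : Set (ℕ → Pm n)) : Prop :=
  ∃ p, IsPath n h u v p ∧ F = {q | Relation.ReflTransGen (FlipStep n h u v) p q}

/-- Vertex set of the support graph `S_F`. -/
def SV (n h : ℕ) (F : Set (ℕ → Pm n)) : Set (Pm n) :=
  {a | ∃ p ∈ F, ∃ i, i ≤ h ∧ p i = a}

/-- Edge relation of the support graph `S_F` (labels are determined: `b * a⁻¹`). -/
def SE (n h : ℕ) (F : Set (ℕ → Pm n)) (a b : Pm n) : Prop :=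
  ∃ p ∈ F, ∃ i, i < h ∧ p i = a ∧ p (i + 1) = b

/-- Vertex set of the time-support graph `TS_F`. -/
def TSV (n h : ℕ) (F : Set (ℕ → Pm n)) : Set (Pm n × ℕ) :=
  {x | x.2 ≤ h ∧ ∃ p ∈ F, p x.2 = x.1}

/-- Edge relation of the time-support graph `TS_F`. -/
def TSE (n h : ℕ) (F : Set (ℕ → Pm n)) (x y : Pm n × ℕ) : Prop :=
  x.2 < h ∧ y.2 = x.2 + 1 ∧ ∃ p ∈ F, p x.2 = x.1 ∧ p (x.2 + 1) = y.1

/-- In-degree of a vertex of `TS_F`. -/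
noncomputable def indeg (n h : ℕ) (F : Set (ℕ → Pm n)) (x : Pm n × ℕ) : ℕ :=
  Set.ncard {w | TSE n h F w x}

/-- Out-degree of a vertex of `TS_F`. -/
noncomputable def outdeg (n h : ℕ) (F : Set (ℕ → Pm n)) (x : Pm n × ℕ) : ℕ :=
  Set.ncard {w | TSE n h F x w}

/-- The `t`-vector of `F`: `tᵢ` is the number of vertices of `TS_F` at time `i`. -/
noncomputable def tvec (n h : ℕ) (F : Set (ℕ → Pm n)) (i : ℕ) : ℕ :=
  Set.ncard {a : Pm n | (a, i) ∈ TSV n h F}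

lemma TSV_finite (n h : ℕ) (F : Set (ℕ → Pm n)) : (TSV n h F).Finite :=
  Set.Finite.subset (Set.finite_univ.prod (Set.finite_Iic h))
    (fun _ hx => Set.mem_prod.mpr ⟨Set.mem_univ _, hx.1⟩)

/-- The `ι`-polynomial of `F`:
`ι_F(x,y,t) = Σ_{(a,i) ∈ V(TS_F)} x^indeg(a,i) y^outdeg(a,i) t^i`
(the variables `x, y, t` are `X 0, X 1, X 2`). -/
noncomputable def iota (n h : ℕ) (F : Set (ℕ → Pm n)) : MvPolynomial (Fin 3) ℤ :=
  ∑ x ∈ (TSV_finite n h F).toFinset,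
    X 0 ^ indeg n h F x * X 1 ^ outdeg n h F x * X 2 ^ x.2

/-- A reflection ordering on the transpositions of `𝔖ₙ`: a total order `⪯` on the set of
transpositions such that for all `a < b < c`, either
`(a,b) ⪯ (a,c) ⪯ (b,c)` or `(b,c) ⪯ (a,c) ⪯ (a,b)`. -/
structure ReflOrder (n : ℕ) where
  le : Pm n → Pm n → Prop
  le_refl : ∀ t : Pm n, t.IsSwap → le t t
  le_antisymm : ∀ s t : Pm n, s.IsSwap → t.IsSwap → le s t → le t s → s = t
  le_trans : ∀ r s t : Pm n, r.IsSwap → s.IsSwap → t.IsSwap → le r s → le s t → le r t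
  le_total : ∀ s t : Pm n, s.IsSwap → t.IsSwap → le s t ∨ le t s
  reflection_cond : ∀ a b c : Fin n, a < b → b < c →
    (le (Equiv.swap a b) (Equiv.swap a c) ∧ le (Equiv.swap a c) (Equiv.swap b c)) ∨
    (le (Equiv.swap b c) (Equiv.swap a c) ∧ le (Equiv.swap a c) (Equiv.swap a b))

/-- A path (of length `h`) is increasing w.r.t. an order `le` on transpositions if its
sequence of labels is weakly increasing. -/
def IncreasingRel {n : ℕ} (h : ℕ) (le : Pm n → Pm n → Prop) (p : ℕ → Pm n) : Prop :=
  ∀ i, i + 1 < h → le (lab p i) (lab p (i + 1))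

/-- The number of increasing paths (w.r.t. a reflection ordering) in `F`. -/
noncomputable def cnt (n h : ℕ) (F : Set (ℕ → Pm n)) (ord : ReflOrder n) : ℕ :=
  Set.ncard {p ∈ F | IncreasingRel h ord.le p}

/-- Lexicographic comparison of the label sequences of two paths of length `h`. -/
def LabelLexLe {n : ℕ} (h : ℕ) (le : Pm n → Pm n → Prop) (p q : ℕ → Pm n) : Prop :=
  (∀ i, i < h → lab p i = lab q i) ∨
  ∃ i, i < h ∧ (∀ j, j < i → lab p j = lab q j) ∧ lab p i ≠ lab q i ∧ le (lab p i) (lab q i)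

/-- A path of length `h` from `(u,0)` to `(v,h)` in the time-support graph `TS_F`,
encoded by its sequence of permutation components. -/
def IsTSPath (n h : ℕ) (F : Set (ℕ → Pm n)) (u v : Pm n) (y : ℕ → Pm n) : Prop :=
  y 0 = u ∧ (∀ j, h ≤ j → y j = v) ∧ ∀ i, i < h → TSE n h F (y i, i) (y (i + 1), i + 1)

/-- The set of labels of the paths of `F`. -/
def labelSet (n h : ℕ) (F : Set (ℕ → Pm n)) : Set (Pm n) :=
  {t | ∃ p ∈ F, ∃ i, i < h ∧ lab p i = t}

/-- Lexicographic order on the transpositions of `𝔖ₙ`: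
`(a,b) ⪯ (c,d)` (with `a<b`, `c<d`) iff `a < c`, or `a = c` and `b ≤ d`. -/
def lexLe (n : ℕ) (s t : Pm n) : Prop :=
  ∃ a b c d : Fin n, a < b ∧ c < d ∧ s = Equiv.swap a b ∧ t = Equiv.swap c d ∧
    (a < c ∨ (a = c ∧ b ≤ d))

/-- Isomorphism of flipclasses: a pair `(f, g)` where `f` is a flips-preserving bijection
on the underlying permutations (inducing a bijection of the path sets), and `g` is a
label-matching bijection of the label sets that is order preserving w.r.t. the
lexicographic orders. -/
def FlipclassIso (n m h : ℕ) (F : Set (ℕ → Pm n)) (F' : Set (ℕ → Pm m)) : Prop :=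
  ∃ f : Pm n → Pm m, ∃ g : Pm n → Pm m,
    Set.BijOn f (SV n h F) (SV m h F') ∧
    Set.BijOn (fun p => f ∘ p) F F' ∧
    (∀ p ∈ F, ∀ q ∈ F, ∀ i, FlipAt h i p q → FlipAt h i (f ∘ p) (f ∘ q)) ∧
    Set.BijOn g (labelSet n h F) (labelSet m h F') ∧
    (∀ p ∈ F, ∀ i, i < h → g (lab p i) = lab (f ∘ p) i) ∧
    (∀ s t, s ∈ labelSet n h F → t ∈ labelSet n h F → lexLe n s t → lexLe m (g s) (g t))

/-- `G(Γ)` is connected: any two letters moved by some label of the path `p` are joined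
by a chain of labels. -/
def IrredPath (n k : ℕ) (p : ℕ → Pm n) : Prop :=
  ∀ a b : Fin n, (∃ i, i < k ∧ lab p i a ≠ a) → (∃ i, i < k ∧ lab p i b ≠ b) →
    Relation.ReflTransGen (fun x y => ∃ i, i < k ∧ lab p i = Equiv.swap x y) a b

/-- The set of positions of the values in `E` in the one-line notation of `w`,
i.e. `w⁻¹(E)`. -/
def posSet {n : ℕ} (w : Pm n) (E : Finset (Fin n)) : Finset (Fin n) := E.image ⇑w.symm

lemma mem_posSet {n : ℕ} {w : Pm n} {E : Finset (Fin n)} {x : Fin n} :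
    x ∈ posSet w E ↔ w x ∈ E := by
  constructor
  · intro hx
    rcases Finset.mem_image.mp hx with ⟨y, hy, rfl⟩
    simpa using hy
  · intro hx
    exact Finset.mem_image.mpr ⟨w x, hx, by simp⟩

lemma posSet_card {n : ℕ} (w : Pm n) (E : Finset (Fin n)) : (posSet w E).card = E.card :=
  Finset.card_image_of_injective _ w.symm.injective

/-- The "pattern" map `r_E : 𝔖ₙ → 𝔖ₘ` (`|E| = m`): delete from the one-line notation of
`w` the values not in `E`, and renumber the values in `E` via the order preserving
bijection `E → [m]`. -/
noncomputable def rE (n m : ℕ) (E : Finset (Fin n)) (hm : E.card = m) (w : Pm n) : Pm m :=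
  (((posSet w E).orderIsoOfFin (by rw [posSet_card, hm])).toEquiv.trans
    (⟨fun x => ⟨w x.1, mem_posSet.mp x.2⟩,
      fun y => ⟨w.symm y.1, mem_posSet.mpr (by simp [y.2])⟩,
      fun x => Subtype.ext (by simp),
      fun y => Subtype.ext (by simp)⟩ :
        {x // x ∈ posSet w E} ≃ {y // y ∈ E})).trans (E.orderIsoOfFin hm).toEquiv.symm

/-- `r_E` applied to each vertex of a path. -/
noncomputable def rEPath (n m : ℕ) (E : Finset (Fin n)) (hm : E.card = m)
    (p : ℕ → Pm n) : ℕ → Pm m := fun j => rE n m E hm (p j)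

/-- The total order `⪯_{r_E}` induced on the transpositions of `𝔖ₘ` by a reflection
ordering of `𝔖ₙ` via the order preserving bijection `r_E⁻¹ : [m] → E`. -/
def inducedOrd (n m : ℕ) (ord : ReflOrder n) (E : Finset (Fin n)) (hm : E.card = m) :
    Pm m → Pm m → Prop := fun s t =>
  ∃ a b c d : Fin m, a < b ∧ c < d ∧ s = Equiv.swap a b ∧ t = Equiv.swap c d ∧
    ord.le (Equiv.swap (↑(E.orderIsoOfFin hm a)) (↑(E.orderIsoOfFin hm b)))
           (Equiv.swap (↑(E.orderIsoOfFin hm c)) (↑(E.orderIsoOfFin hm d)))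

/-- Isomorphism of (unlabelled, or labelled with determined labels) directed graphs. -/
def GraphIso {α β : Type*} (V1 : Set α) (E1 : α → α → Prop)
    (V2 : Set β) (E2 : β → β → Prop) : Prop :=
  ∃ φ : α → β, Set.BijOn φ V1 V2 ∧ ∀ x ∈ V1, ∀ y ∈ V1, (E1 x y ↔ E2 (φ x) (φ y))

/-- Vertices of the `k`-crown: `u`, `a₁,…,a_k`, `b₁,…,b_k`, `v`. -/
def CrownV (k : ℕ) : Type := (Unit ⊕ Fin k) ⊕ (Fin k ⊕ Unit)

/-- Edges of the `k`-crown: `u → aᵢ`, `aᵢ → bᵢ`, `a_{i+1} → bᵢ` (indices mod `k`),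
`bᵢ → v`. -/
def crownEdge (k : ℕ) : CrownV k → CrownV k → Prop
  | Sum.inl (Sum.inl _), Sum.inl (Sum.inr _) => True
  | Sum.inl (Sum.inr i), Sum.inr (Sum.inl j) => i.val = j.val ∨ i.val = (j.val + 1) % k
  | Sum.inr (Sum.inl _), Sum.inr (Sum.inr _) => True
  | _, _ => False

/-- The set `W₁ · W₂` (internal direct product when supports are disjoint). -/
def dprod {n : ℕ} (W1 W2 : Subgroup (Pm n)) : Set (Pm n) :=
  {w | ∃ w1 ∈ W1, ∃ w2 ∈ W2, w = w1 * w2}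

/-- A path in the subgraph of the Bruhat graph induced on the subset `X`. -/
def IsPathIn (n : ℕ) (X : Set (Pm n)) (h : ℕ) (u v : Pm n) (p : ℕ → Pm n) : Prop :=
  IsPath n h u v p ∧ ∀ j, p j ∈ X

/-- Flip step within the induced subgraph on `X`. -/
def FlipStepIn (n : ℕ) (X : Set (Pm n)) (h : ℕ) (u v : Pm n) (p q : ℕ → Pm n) : Prop :=
  IsPathIn n X h u v p ∧ IsPathIn n X h u v q ∧ ∃ i, FlipAt h i p q

/-- Flipclass of paths in the induced subgraph on `X`. -/
def IsFlipclassIn (n : ℕ) (X : Set (Pm n)) (h : ℕ) (u v : Pm n)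
    (F : Set (ℕ → Pm n)) : Prop :=
  ∃ p, IsPathIn n X h u v p ∧ F = {q | Relation.ReflTransGen (FlipStepIn n X h u v) p q}

/-- `Δ` (a path of length `k`, normalized) is the projection (deduplication) of the
vertexwise-projected sequence `s` (defined on `0,…,hh`). -/
def IsProj (n hh k : ℕ) (s Δ : ℕ → Pm n) : Prop :=
  ∃ φ : ℕ → ℕ, Monotone φ ∧ φ 0 = 0 ∧ (∀ j, hh ≤ j → φ j = k) ∧
    (∀ j, j < hh →
      (s (j + 1) = s j ∧ φ (j + 1) = φ j) ∨ (s (j + 1) ≠ s j ∧ φ (j + 1) = φ j + 1)) ∧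
    (∀ j, j ≤ hh → s j = Δ (φ j)) ∧ ∀ j, k ≤ j → Δ j = Δ k



lemma swap_of_apply {n : ℕ} {σ : Pm n} (hs : σ.IsSwap) {x y : Fin n}
    (hxy : σ x = y) (hne : x ≠ y) : σ = Equiv.swap x y := by
  obtain ⟨u, v, huv, rfl⟩ := hs
  rcases eq_or_ne x u with rfl | hxu
  · rw [Equiv.swap_apply_left] at hxy; subst hxy; rfl
  rcases eq_or_ne x v with rfl | hxv
  · rw [Equiv.swap_apply_right] at hxy; subst hxy; exact Equiv.swap_comm _ _
  · rw [Equiv.swap_apply_of_ne_of_ne hxu hxv] at hxy; exact absurd hxy hne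

lemma swap_moved {n : ℕ} {a b x : Fin n} (h : Equiv.swap a b x ≠ x) : x = a ∨ x = b := by
  by_contra hc
  push_neg at hc
  exact h (Equiv.swap_apply_of_ne_of_ne hc.1 hc.2)

/-- key support lemma: if `s' * s ≠ 1` with `s, s'` transpositions, then any point
fixed by `s' * s` is fixed by both. -/
lemma fixed_of_prod_fixed {n : ℕ} {s s' : Pm n} (hs : s.IsSwap) (hs' : s'.IsSwap)
    (hne : s' * s ≠ 1) {x : Fin n} (hx : (s' * s) x = x) : s x = x ∧ s' x = x := by
  by_cases h1 : s x = x
  · refine ⟨h1, ?_⟩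
    have : s' (s x) = x := hx
    rwa [h1] at this
  · exfalso
    have hy : s' (s x) = x := hx
    have hxy : x ≠ s x := fun h => h1 h.symm
    have hS : s = Equiv.swap x (s x) := swap_of_apply hs rfl hxy
    have hS' : s' = Equiv.swap (s x) x := swap_of_apply hs' hy (fun h => h1 h)
    apply hne
    rw [hS, hS', Equiv.swap_comm (s x) x, Equiv.swap_mul_self]

lemma swap_pair_eq {n : ℕ} {a b c d : Fin n} (hab : a < b) (hcd : c < d)
    (h : Equiv.swap a b = Equiv.swap c d) : a = c ∧ b = d := by
  have h1 : Equiv.swap c d a = b := by rw [← h, Equiv.swap_apply_left]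
  rcases eq_or_ne a c with rfl | hac
  · rw [Equiv.swap_apply_left] at h1; exact ⟨rfl, h1.symm⟩
  rcases eq_or_ne a d with rfl | had
  · rw [Equiv.swap_apply_right] at h1
    subst h1
    exact absurd (hab.trans hcd) (lt_irrefl a)
  · rw [Equiv.swap_apply_of_ne_of_ne hac had] at h1
    exact absurd h1 hab.ne



section lencrit
variable {n : ℕ}

lemma len_lt_of_pos {w : Pm n} {a b : Fin n} (hab : a < b)
    (hpq : w.symm a < w.symm b) : len w < len (Equiv.swap a b * w) := by
  classical
  set t := Equiv.swap a b with ht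
  set v := t * w with hv
  set p := w.symm a with hp
  set q := w.symm b with hq
  have hwp : w p = a := w.apply_symm_apply a
  have hwq : w q = b := w.apply_symm_apply b
  have hvz : ∀ z, v z = Equiv.swap a b (w z) := fun z => rfl
  have hvp : v p = b := by rw [hvz, hwp, Equiv.swap_apply_left]
  have hvq : v q = a := by rw [hvz, hwq, Equiv.swap_apply_right]
  have hv_other : ∀ z, w z ≠ a → w z ≠ b → v z = w z := fun z h1 h2 => by
    rw [hvz, Equiv.swap_apply_of_ne_of_ne h1 h2]
  have hinj : ∀ z z' : Fin n, w z = w z' → z = z' := fun z z' h => w.injective h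
  -- the maps
  set Iw := Finset.univ.filter fun z : Fin n × Fin n => z.1 < z.2 ∧ w z.2 < w z.1 with hIw
  set Iv := Finset.univ.filter fun z : Fin n × Fin n => z.1 < z.2 ∧ v z.2 < v z.1 with hIv
  set G : Fin n × Fin n → Fin n × Fin n := fun z =>
    if z.2 = p ∧ w z.1 < b then (z.1, q) else if z.1 = q ∧ a < w z.2 then (p, z.2) else z
    with hG
  set H : Fin n × Fin n → Fin n × Fin n := fun z =>
    if z.2 = q ∧ a < w z.1 ∧ w z.1 < b then (z.1, p)
    else if z.1 = p ∧ a < w z.2 ∧ w z.2 < b then (q, z.2) else z with hH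
  have hpq_ne : p ≠ q := hpq.ne
  have hmem : ∀ z : Fin n × Fin n, z ∈ Iw ↔ z.1 < z.2 ∧ w z.2 < w z.1 := by
    intro z; simp [hIw]
  have hmemv : ∀ z : Fin n × Fin n, z ∈ Iv ↔ z.1 < z.2 ∧ v z.2 < v z.1 := by
    intro z; simp [hIv]
  have key : ∀ z ∈ Iw, G z ∈ Iv.erase (p, q) ∧ H (G z) = z := by
    rintro ⟨x, y⟩ hz
    rw [hmem] at hz
    obtain ⟨hxy, hwyx⟩ := hz
    simp only [hG]
    by_cases hA : y = p ∧ w x < b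
    · obtain ⟨rfl, hwxb⟩ := hA
      have hax : a < w x := by rwa [hwp] at hwyx
      have hwxa : w x ≠ a := hax.ne'
      have hwxb' : w x ≠ b := hwxb.ne
      rw [if_pos ⟨rfl, hwxb⟩]
      constructor
      · rw [Finset.mem_erase, hmemv]
        refine ⟨?_, hxy.trans hpq, ?_⟩
        · intro hc
          have hxp : x = p := congrArg Prod.fst hc
          exact hxy.ne hxp
        · rw [hvq, hv_other x hwxa hwxb']; exact hax
      · simp only [hH]
        rw [if_pos ⟨trivial, hax, hwxb⟩]
    · rw [if_neg hA]
      by_cases hB : x = q ∧ a < w y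
      · obtain ⟨rfl, hay⟩ := hB
        have hwyb : w y < b := by rwa [hwq] at hwyx
        have hwya : w y ≠ a := hay.ne'
        have hwyb' : w y ≠ b := hwyb.ne
        rw [if_pos ⟨rfl, hay⟩]
        constructor
        · rw [Finset.mem_erase, hmemv]
          refine ⟨?_, hpq.trans hxy, ?_⟩
          · intro hc
            have hyq : y = q := congrArg Prod.snd hc
            exact hxy.ne hyq.symm
          · rw [hvp, hv_other y hwya hwyb']; exact hwyb
        · simp only [hH]
          have hnq : ¬(y = q ∧ a < w p ∧ w p < b) := by
            rintro ⟨rfl, _⟩; exact absurd rfl hxy.ne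
          rw [if_neg hnq, if_pos ⟨trivial, hay, hwyb⟩]
      · rw [if_neg hB]
        -- case C
        have hC : v y < v x ∧ (x, y) ≠ (p, q) ∧
            ¬(y = q ∧ a < w x ∧ w x < b) ∧ ¬(x = p ∧ a < w y ∧ w y < b) := by
          rcases eq_or_ne y p with rfl | hyp
          · -- y = p : w x > b
            have hxb : w x ≠ b := by
              intro hxb
              have : x = q := hinj _ _ (by rw [hxb, hwq])
              subst this
              exact absurd (hxy.trans hpq) (lt_irrefl _)
            have hbx : b < w x := by
              rcases lt_or_ge (w x) b with h' | h'
              · exact absurd ⟨rfl, h'⟩ hA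
              · exact lt_of_le_of_ne h' (Ne.symm hxb)
            have hxa : w x ≠ a := fun h => by
              rw [hwp] at hwyx; rw [h] at hwyx; exact absurd hwyx (lt_irrefl _)
            refine ⟨?_, ?_, ?_, ?_⟩
            · rw [hvp, hv_other x hxa hxb]; exact hbx
            · intro hc
              have h2 : p = q := congrArg Prod.snd hc
              exact hpq_ne h2
            · rintro ⟨h, _⟩; exact hpq_ne h
            · rintro ⟨h, _⟩; exact hxy.ne h
          rcases eq_or_ne y q with rfl | hyq
          · -- y = q : w x > b
            have hbx : b < w x := by rwa [hwq] at hwyx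
            have hxa : w x ≠ a := fun h => by
              rw [h] at hbx; exact absurd (hab.trans hbx) (lt_irrefl _)
            refine ⟨?_, ?_, ?_, ?_⟩
            · rw [hvq, hv_other x hxa hbx.ne']
              exact lt_of_le_of_lt hab.le hbx
            · intro hc
              have hxp : x = p := congrArg Prod.fst hc
              rw [hxp, hwp] at hbx; exact absurd (hab.trans hbx) (lt_irrefl _)
            · rintro ⟨_, _, hh⟩; exact absurd hbx (not_lt.mpr hh.le)
            · rintro ⟨h, _⟩
              rw [h, hwp] at hbx; exact absurd (hab.trans hbx) (lt_irrefl _)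
          rcases eq_or_ne x p with rfl | hxp
          · -- x = p : w y < a
            have hya : w y < a := by rwa [hwp] at hwyx
            have hyb : w y ≠ b := (hya.trans hab).ne
            refine ⟨?_, ?_, ?_, ?_⟩
            · rw [hvp, hv_other y hya.ne hyb]; exact hya.trans hab
            · intro hc
              have h2 : y = q := congrArg Prod.snd hc
              exact hyq h2
            · rintro ⟨h, _⟩; exact absurd h hyq
            · rintro ⟨_, h, _⟩; exact absurd hya (not_lt.mpr h.le)
          rcases eq_or_ne x q with rfl | hxq
          · -- x = q : w y < a  (since ¬B gives ¬(a < w y), and w y ≠ a)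
            have hya' : ¬ a < w y := fun h => hB ⟨rfl, h⟩
            have hyne : w y ≠ a := fun h => by
              have : y = p := hinj _ _ (by rw [h, hwp])
              subst this
              exact absurd (hpq.trans hxy) (lt_irrefl _)
            have hya : w y < a := lt_of_le_of_ne (not_lt.mp hya') hyne
            refine ⟨?_, ?_, ?_, ?_⟩
            · rw [hvq, hv_other y hya.ne (hya.trans hab).ne]; exact hya
            · intro hc
              have h2 : q = p := congrArg Prod.fst hc
              exact hpq_ne h2.symm
            · rintro ⟨h, _⟩; exact absurd h hyq
            · rintro ⟨h, _⟩; exact absurd h hxp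
          · -- generic
            have hxa : w x ≠ a := fun h => hxp (hinj _ _ (by rw [h, hwp]))
            have hxb : w x ≠ b := fun h => hxq (hinj _ _ (by rw [h, hwq]))
            have hya : w y ≠ a := fun h => hyp (hinj _ _ (by rw [h, hwp]))
            have hyb : w y ≠ b := fun h => hyq (hinj _ _ (by rw [h, hwq]))
            refine ⟨?_, ?_, ?_, ?_⟩
            · rw [hv_other x hxa hxb, hv_other y hya hyb]; exact hwyx
            · intro hc
              have h2 : x = p := congrArg Prod.fst hc
              exact hxp h2
            · rintro ⟨h, _⟩; exact absurd h hyq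
            · rintro ⟨h, _⟩; exact absurd h hxp
        obtain ⟨h1, h2, h3, h4⟩ := hC
        refine ⟨?_, ?_⟩
        · rw [Finset.mem_erase, hmemv]; exact ⟨h2, hxy, h1⟩
        · simp only [hH]; rw [if_neg h3, if_neg h4]
  have hmaps : ∀ z ∈ Iw, G z ∈ Iv.erase (p, q) := fun z hz => (key z hz).1
  have hinjOn : Set.InjOn G Iw := by
    intro z hz z' hz' hGz
    have h1 := (key z hz).2
    have h2 := (key z' hz').2
    rw [← h1, ← h2, hGz]
  have hcard : Iw.card ≤ (Iv.erase (p, q)).card :=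
    Finset.card_le_card_of_injOn G hmaps hinjOn
  have hpqIv : (p, q) ∈ Iv := by
    rw [hmemv]; exact ⟨hpq, by rw [hvp, hvq]; exact hab⟩
  have : (Iv.erase (p, q)).card = Iv.card - 1 := Finset.card_erase_of_mem hpqIv
  have hpos : 0 < Iv.card := Finset.card_pos.mpr ⟨_, hpqIv⟩
  show Iw.card < Iv.card
  omega

lemma len_lt_iff {w : Pm n} {a b : Fin n} (hab : a < b) :
    len w < len (Equiv.swap a b * w) ↔ w.symm a < w.symm b := by
  constructor
  · intro hlt
    by_contra hc
    push_neg at hc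
    have hne : w.symm b ≠ w.symm a := fun h => hab.ne (by
      have := congrArg w h; simpa using this.symm)
    have hlt2 : w.symm b < w.symm a := lt_of_le_of_ne hc hne
    have h2 : len (Equiv.swap a b * w) < len (Equiv.swap a b * (Equiv.swap a b * w)) := by
      apply len_lt_of_pos hab
      simp only [Equiv.Perm.mul_def]
      show ((Equiv.swap a b * w).symm) a < ((Equiv.swap a b * w).symm) b
      have e1 : (Equiv.swap a b * w).symm a = w.symm b := by
        simp [Equiv.Perm.mul_def, Equiv.symm_trans_apply]
      have e2 : (Equiv.swap a b * w).symm b = w.symm a := by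
        simp [Equiv.Perm.mul_def, Equiv.symm_trans_apply]
      rw [e1, e2]; exact hlt2
    rw [← mul_assoc, Equiv.swap_mul_self, one_mul] at h2
    omega
  · exact len_lt_of_pos hab
end lencrit



section rEsec
variable {n m : ℕ} {E : Finset (Fin n)} (hm : E.card = m)
include hm

lemma posSet_card' (w : Pm n) : (posSet w E).card = m := by rw [posSet_card, hm]

lemma rE_val (w : Pm n) (x : Fin m) :
    (E.orderIsoOfFin hm (rE n m E hm w x) : Fin n)
      = w ((posSet w E).orderIsoOfFin (posSet_card' hm w) x) := by
  simp [rE]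

lemma orderIsoOfFin_congr {A B : Finset (Fin n)} (hAB : A = B) {hA : A.card = m}
    {hB : B.card = m} (x : Fin m) :
    (A.orderIsoOfFin hA x : Fin n) = B.orderIsoOfFin hB x := by
  subst hAB; rfl
end rEsec

section rEsec2
variable {n m : ℕ} {E : Finset (Fin n)}

/-- the letter renaming `E → Fin m`. -/
noncomputable def eidx (hm : E.card = m) (a : Fin n) (ha : a ∈ E) : Fin m :=
  (E.orderIsoOfFin hm).symm ⟨a, ha⟩

lemma eidx_lt_iff (hm : E.card = m) {a b : Fin n} (ha : a ∈ E) (hb : b ∈ E) :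
    eidx hm a ha < eidx hm b hb ↔ a < b := by
  rw [eidx, eidx, (E.orderIsoOfFin hm).symm.lt_iff_lt]
  exact Subtype.mk_lt_mk

lemma eidx_inj (hm : E.card = m) {a b : Fin n} (ha : a ∈ E) (hb : b ∈ E)
    (h : eidx hm a ha = eidx hm b hb) : a = b := by
  have := (E.orderIsoOfFin hm).symm.injective h
  exact congrArg Subtype.val this

lemma rE_symm_apply (hm : E.card = m) (w : Pm n) (a : Fin n) (ha : a ∈ E) :
    (rE n m E hm w).symm (eidx hm a ha)
      = ((posSet w E).orderIsoOfFin (posSet_card' hm w)).symm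
          ⟨w.symm a, mem_posSet.mpr (by simp [ha])⟩ := by
  rw [Equiv.symm_apply_eq]
  apply (E.orderIsoOfFin hm).injective
  apply Subtype.ext
  rw [rE_val hm]
  simp [eidx]

lemma rE_symm_lt_iff (hm : E.card = m) (w : Pm n) {a b : Fin n} (ha : a ∈ E) (hb : b ∈ E) :
    (rE n m E hm w).symm (eidx hm a ha) < (rE n m E hm w).symm (eidx hm b hb)
      ↔ w.symm a < w.symm b := by
  rw [rE_symm_apply, rE_symm_apply]
  rw [((posSet w E).orderIsoOfFin (posSet_card' hm w)).symm.lt_iff_lt]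
  exact Subtype.mk_lt_mk
end rEsec2

section rEsec3
variable {n m : ℕ} {E : Finset (Fin n)}

def Supp {n : ℕ} (E : Finset (Fin n)) (w : Pm n) : Prop := ∀ x, w x ≠ x → x ∈ E

lemma supp_one : Supp E (1 : Pm n) := fun x hx => absurd rfl hx

lemma supp_mul {σ τ : Pm n} (hσ : Supp E σ) (hτ : Supp E τ) : Supp E (σ * τ) := by
  intro x hx
  by_contra hxE
  have h1 : τ x = x := by_contra fun h => hxE (hτ x h)
  have h2 : σ x = x := by_contra fun h => hxE (hσ x h)
  exact hx (by rw [Equiv.Perm.mul_apply, h1, h2])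

lemma supp_swap {a b : Fin n} (ha : a ∈ E) (hb : b ∈ E) : Supp E (Equiv.swap a b) := by
  intro x hx
  rcases swap_moved hx with rfl | rfl
  · exact ha
  · exact hb

lemma supp_mem_iff {σ : Pm n} (hσ : Supp E σ) (y : Fin n) : σ y ∈ E ↔ y ∈ E := by
  constructor
  · intro h
    by_contra hy
    have : σ y = y := by_contra fun hh => hy (hσ y hh)
    rw [this] at h; exact hy h
  · intro hy
    by_contra h
    have h1 : σ (σ y) = σ y := by_contra fun hh => h (hσ _ hh)
    have := σ.injective h1
    rw [this] at h; exact h hy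

lemma posSet_supp_mul {σ : Pm n} (hσ : Supp E σ) (z : Pm n) :
    posSet (σ * z) E = posSet z E := by
  ext x
  rw [mem_posSet, mem_posSet, Equiv.Perm.mul_apply, supp_mem_iff hσ]

lemma swap_moved' {a b x : Fin n} (h : Equiv.swap a b x ≠ x) : x = a ∨ x = b := swap_moved h

/-- rE intertwines E-supported transpositions. -/
lemma rE_swap_mul (hm : E.card = m) {a b : Fin n} (ha : a ∈ E) (hb : b ∈ E)
    (w : Pm n) :
    rE n m E hm (Equiv.swap a b * w)
      = Equiv.swap (eidx hm a ha) (eidx hm b hb) * rE n m E hm w := by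
  have hps : posSet (Equiv.swap a b * w) E = posSet w E :=
    posSet_supp_mul (supp_swap ha hb) w
  apply Equiv.ext
  intro x
  apply (E.orderIsoOfFin hm).injective
  apply Subtype.ext
  rw [rE_val hm]
  have hcongr :
      ((posSet (Equiv.swap a b * w) E).orderIsoOfFin
        (posSet_card' hm (Equiv.swap a b * w)) x : Fin n)
      = (posSet w E).orderIsoOfFin (posSet_card' hm w) x :=
    orderIsoOfFin_congr hm hps x
  rw [hcongr]
  -- LHS value: swap a b (w (π x)); RHS: ι (swap ēa ēb (rE w x))
  rw [Equiv.Perm.mul_apply]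
  rw [Equiv.Perm.mul_apply]
  -- now : swap a b (w (π x)) = ι (swap ēa ēb (rE w x))
  set c := rE n m E hm w x with hc
  have hval : (E.orderIsoOfFin hm c : Fin n) = w ((posSet w E).orderIsoOfFin (posSet_card' hm w) x) :=
    rE_val hm w x
  rw [← hval]
  by_cases h1 : c = eidx hm a ha
  · rw [h1]
    rw [Equiv.swap_apply_left]
    have e1 : (E.orderIsoOfFin hm (eidx hm a ha) : Fin n) = a := by
      simp [eidx]
    have e2 : (E.orderIsoOfFin hm (eidx hm b hb) : Fin n) = b := by
      simp [eidx]
    rw [e1, e2, Equiv.swap_apply_left]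
  by_cases h2 : c = eidx hm b hb
  · rw [h2]
    rw [Equiv.swap_apply_right]
    have e1 : (E.orderIsoOfFin hm (eidx hm a ha) : Fin n) = a := by simp [eidx]
    have e2 : (E.orderIsoOfFin hm (eidx hm b hb) : Fin n) = b := by simp [eidx]
    rw [e1, e2, Equiv.swap_apply_right]
  · rw [Equiv.swap_apply_of_ne_of_ne h1 h2]
    have hca : (E.orderIsoOfFin hm c : Fin n) ≠ a := by
      intro h
      apply h1
      have : E.orderIsoOfFin hm c = ⟨a, ha⟩ := Subtype.ext h
      rw [eidx, ← this, OrderIso.symm_apply_apply]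
    have hcb : (E.orderIsoOfFin hm c : Fin n) ≠ b := by
      intro h
      apply h2
      have : E.orderIsoOfFin hm c = ⟨b, hb⟩ := Subtype.ext h
      rw [eidx, ← this, OrderIso.symm_apply_apply]
    rw [Equiv.swap_apply_of_ne_of_ne hca hcb]
end rEsec3


section rEsec4
variable {n m : ℕ} {E : Finset (Fin n)}

lemma rE_coset_inj (hm : E.card = m) {σ σ' z : Pm n} (hσ : Supp E σ) (hσ' : Supp E σ')
    (h : rE n m E hm (σ * z) = rE n m E hm (σ' * z)) : σ * z = σ' * z := by
  apply Equiv.ext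
  intro j
  by_cases hj : z j ∈ E
  · have hjp : j ∈ posSet z E := mem_posSet.mpr hj
    set π := (posSet z E).orderIsoOfFin (posSet_card' hm z) with hπ
    set x := π.symm ⟨j, hjp⟩ with hx
    have hπx : (π x : Fin n) = j := by rw [hx, OrderIso.apply_symm_apply]
    have e1 : (E.orderIsoOfFin hm (rE n m E hm (σ * z) x) : Fin n) = (σ * z) j := by
      rw [rE_val hm]
      rw [orderIsoOfFin_congr hm (posSet_supp_mul hσ z) x (hB := posSet_card' hm z)]
      rw [← hπ, hπx]
    have e2 : (E.orderIsoOfFin hm (rE n m E hm (σ' * z) x) : Fin n) = (σ' * z) j := by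
      rw [rE_val hm]
      rw [orderIsoOfFin_congr hm (posSet_supp_mul hσ' z) x (hB := posSet_card' hm z)]
      rw [← hπ, hπx]
    rw [← e1, ← e2, h]
  · have h1 : σ (z j) = z j := by_contra fun hh => hj (hσ _ hh)
    have h2 : σ' (z j) = z j := by_contra fun hh => hj (hσ' _ hh)
    show σ (z j) = σ' (z j)
    rw [h1, h2]

lemma bedge_transfer_sorted (hm : E.card = m) {a b : Fin n} (ha : a ∈ E) (hb : b ∈ E)
    (hab : a < b) (w : Pm n) :
    (len w < len (Equiv.swap a b * w)) ↔
      (len (rE n m E hm w) < len (rE n m E hm (Equiv.swap a b * w))) := by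
  rw [rE_swap_mul hm ha hb w]
  rw [len_lt_iff hab, len_lt_iff ((eidx_lt_iff hm ha hb).mpr hab)]
  exact (rE_symm_lt_iff hm w ha hb).symm

lemma bedge_transfer (hm : E.card = m) {a b : Fin n} (ha : a ∈ E) (hb : b ∈ E)
    (hab : a ≠ b) (w : Pm n) :
    BEdge w (Equiv.swap a b * w) ↔
      BEdge (rE n m E hm w) (rE n m E hm (Equiv.swap a b * w)) := by
  have hswap1 : (Equiv.swap a b * w) * w⁻¹ = Equiv.swap a b := by group
  have hswap2 : rE n m E hm (Equiv.swap a b * w) * (rE n m E hm w)⁻¹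
      = Equiv.swap (eidx hm a ha) (eidx hm b hb) := by
    rw [rE_swap_mul hm ha hb w]; group
  have hne : eidx hm a ha ≠ eidx hm b hb := fun h => hab (eidx_inj hm ha hb h)
  unfold BEdge
  rw [hswap1, hswap2]
  have hs1 : (Equiv.swap a b).IsSwap := ⟨a, b, hab, rfl⟩
  have hs2 : (Equiv.swap (eidx hm a ha) (eidx hm b hb)).IsSwap := ⟨_, _, hne, rfl⟩
  simp only [hs1, hs2, true_and]
  rcases hab.lt_or_gt with h | h
  · exact bedge_transfer_sorted hm ha hb h w
  · rw [Equiv.swap_comm a b]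
    exact bedge_transfer_sorted hm hb ha h w
end rEsec4


section main
variable {n h : ℕ} {u v : Pm n}

lemma lab_mul (q : ℕ → Pm n) (i : ℕ) : lab q i * q i = q (i + 1) := by
  rw [lab, inv_mul_cancel_right]

/-- labels of paths lie in the given letter set, and are swaps of letters of `E`. -/
def Good (E : Finset (Fin n)) (h : ℕ) (u v : Pm n) (q : ℕ → Pm n) : Prop :=
  IsPath n h u v q ∧
    ∀ i, i < h → ∃ a ∈ E, ∃ b ∈ E, a ≠ b ∧ lab q i = Equiv.swap a b

lemma len_path_lt {q : ℕ → Pm n} (hq : IsPath n h u v q) {i : ℕ} (hi : i < h) :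
    len (q i) < len (q (i + 1)) := (hq.2.2 i hi).2

lemma good_base {p₀ : ℕ → Pm n} (hp₀ : IsPath n h u v p₀) :
    Good ((Finset.range h).biUnion
      (fun i => Finset.univ.filter fun x => lab p₀ i x ≠ x)) h u v p₀ := by
  refine ⟨hp₀, ?_⟩
  intro i hi
  obtain ⟨a, b, hab, hswap⟩ := (hp₀.2.2 i hi).1
  have hswap' : lab p₀ i = Equiv.swap a b := hswap
  refine ⟨a, ?_, b, ?_, hab, hswap'⟩
  · apply Finset.mem_biUnion.mpr
    refine ⟨i, Finset.mem_range.mpr hi, Finset.mem_filter.mpr ⟨Finset.mem_univ _, ?_⟩⟩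
    rw [hswap', Equiv.swap_apply_left]; exact hab.symm
  · apply Finset.mem_biUnion.mpr
    refine ⟨i, Finset.mem_range.mpr hi, Finset.mem_filter.mpr ⟨Finset.mem_univ _, ?_⟩⟩
    rw [hswap', Equiv.swap_apply_right]; exact hab

lemma card_good_E {p₀ : ℕ → Pm n} (hp₀ : IsPath n h u v p₀) :
    ((Finset.range h).biUnion
      (fun i => Finset.univ.filter fun x => lab p₀ i x ≠ x)).card ≤ 2 * h := by
  calc ((Finset.range h).biUnion
      (fun i => Finset.univ.filter fun x => lab p₀ i x ≠ x)).card
      ≤ ∑ i ∈ Finset.range h, (Finset.univ.filter fun x => lab p₀ i x ≠ x).card :=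
        Finset.card_biUnion_le
    _ ≤ ∑ _i ∈ Finset.range h, 2 := by
        apply Finset.sum_le_sum
        intro i hi
        obtain ⟨a, b, hab, hswap⟩ := (hp₀.2.2 i (Finset.mem_range.mp hi)).1
        have hsub : (Finset.univ.filter fun x => lab p₀ i x ≠ x) ⊆ {a, b} := by
          intro x hx
          have hx' : lab p₀ i x ≠ x := (Finset.mem_filter.mp hx).2
          rw [show lab p₀ i = Equiv.swap a b from hswap] at hx'
          rcases swap_moved hx' with rfl | rfl
          · exact Finset.mem_insert_self _ _
          · exact Finset.mem_insert_of_mem (Finset.mem_singleton_self _)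
        calc (Finset.univ.filter fun x => lab p₀ i x ≠ x).card ≤ ({a, b} : Finset (Fin n)).card :=
              Finset.card_le_card hsub
          _ ≤ 2 := Finset.card_insert_le _ _ |>.trans (by simp)
    _ = 2 * h := by simp [mul_comm]

lemma good_step {E : Finset (Fin n)} {q q' : ℕ → Pm n} (hq : Good E h u v q)
    (hstep : FlipStep n h u v q q') : Good E h u v q' := by
  obtain ⟨hqp, hq'p, i, hi0, hih, hne, hagree⟩ := hstep
  refine ⟨hq'p, ?_⟩
  obtain ⟨k, rfl⟩ : ∃ k, i = k + 1 := ⟨i - 1, (Nat.succ_pred_eq_of_pos hi0).symm⟩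
  intro j hj
  rcases eq_or_ne j k with rfl | hjk
  · -- j = k : new label s = q' (k+1) * (q k)⁻¹
    have hq'k : q' j = q j := (hagree j (by omega)).symm
    have hq'k2 : q' (j + 2) = q (j + 2) := (hagree (j+2) (by omega)).symm
    have hs : (lab q' j).IsSwap := (hq'p.2.2 j hj).1
    have hs' : (lab q' (j+1)).IsSwap := by
      have := (hq'p.2.2 (j+1) hih).1
      exact this
    have hprod : lab q' (j+1) * lab q' j = q (j + 2) * (q j)⁻¹ := by
      rw [lab, lab, hq'k, hq'k2]
      group
    have hprod2 : lab q (j+1) * lab q j = q (j + 2) * (q j)⁻¹ := by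
      rw [lab, lab]; group
    have hρne : q (j + 2) * (q j)⁻¹ ≠ 1 := by
      intro hcon
      have : q (j + 2) = q j := by
        have := congrArg (fun z => z * q j) hcon
        simpa [mul_assoc] using this
      have l1 : len (q j) < len (q (j+1)) := len_path_lt hqp hj
      have l2 : len (q (j+1)) < len (q (j+2)) := len_path_lt hqp hih
      rw [this] at l2
      omega
    -- letters of lab q' j are moved points, hence moved by ρ, hence in E
    have hscopy := hs
    obtain ⟨a, b, hab, hswap⟩ := hscopy
    have hmoved : ∀ x, lab q' j x ≠ x → x ∈ E := by
      intro x hx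
      have hρx : (lab q' (j+1) * lab q' j) x ≠ x := by
        intro hcon
        have := fixed_of_prod_fixed hs hs' (by rw [hprod]; exact hρne) hcon
        exact hx this.1
      rw [hprod, ← hprod2] at hρx
      have : lab q j x ≠ x ∨ lab q (j+1) (lab q j x) ≠ lab q j x := by
        by_contra hcon
        push_neg at hcon
        apply hρx
        have h2 := hcon.2
        rw [hcon.1] at h2
        rw [Equiv.Perm.mul_apply, hcon.1]
        exact h2
      obtain ⟨a1, ha1, b1, hb1, hab1, hl1⟩ := hq.2 j hj
      obtain ⟨a2, ha2, b2, hb2, hab2, hl2⟩ := hq.2 (j+1) hih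
      rcases this with h1 | h2
      · rw [hl1] at h1
        rcases swap_moved h1 with rfl | rfl
        · exact ha1
        · exact hb1
      · by_cases hfix : lab q j x = x
        · rw [hfix] at h2
          rw [hl2] at h2
          rcases swap_moved h2 with rfl | rfl
          · exact ha2
          · exact hb2
        · rw [hl1] at hfix
          rcases swap_moved hfix with rfl | rfl
          · exact ha1
          · exact hb1
    refine ⟨a, ?_, b, ?_, hab, hswap⟩
    · apply hmoved
      rw [show lab q' j = Equiv.swap a b from hswap, Equiv.swap_apply_left]
      exact hab.symm
    · apply hmoved
      rw [show lab q' j = Equiv.swap a b from hswap, Equiv.swap_apply_right]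
      exact hab
  rcases eq_or_ne j (k + 1) with rfl | hjk1
  · -- j = k+1 : new label s' = q (k+2) * (q' (k+1))⁻¹
    have hq'k : q' k = q k := (hagree k (by omega)).symm
    have hq'k2 : q' (k + 2) = q (k + 2) := (hagree (k+2) (by omega)).symm
    have hs : (lab q' k).IsSwap := (hq'p.2.2 k (by omega)).1
    have hs' : (lab q' (k+1)).IsSwap := (hq'p.2.2 (k+1) hj).1
    have hprod : lab q' (k+1) * lab q' k = q (k + 2) * (q k)⁻¹ := by
      rw [lab, lab, hq'k, hq'k2]
      group
    have hprod2 : lab q (k+1) * lab q k = q (k + 2) * (q k)⁻¹ := by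
      rw [lab, lab]; group
    have hρne : q (k + 2) * (q k)⁻¹ ≠ 1 := by
      intro hcon
      have : q (k + 2) = q k := by
        have := congrArg (fun z => z * q k) hcon
        simpa [mul_assoc] using this
      have l1 : len (q k) < len (q (k+1)) := len_path_lt hqp (by omega)
      have l2 : len (q (k+1)) < len (q (k+2)) := len_path_lt hqp hj
      rw [this] at l2
      omega
    have hscopy := hs'
    obtain ⟨a, b, hab, hswap⟩ := hscopy
    have hmoved : ∀ x, lab q' (k+1) x ≠ x → x ∈ E := by
      intro x hx
      have hρx : (lab q' (k+1) * lab q' k) x ≠ x := by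
        intro hcon
        have := fixed_of_prod_fixed hs hs' (by rw [hprod]; exact hρne) hcon
        exact hx this.2
      rw [hprod, ← hprod2] at hρx
      have : lab q k x ≠ x ∨ lab q (k+1) (lab q k x) ≠ lab q k x := by
        by_contra hcon
        push_neg at hcon
        apply hρx
        have h2 := hcon.2
        rw [hcon.1] at h2
        rw [Equiv.Perm.mul_apply, hcon.1]
        exact h2
      obtain ⟨a1, ha1, b1, hb1, hab1, hl1⟩ := hq.2 k (by omega)
      obtain ⟨a2, ha2, b2, hb2, hab2, hl2⟩ := hq.2 (k+1) hj
      rcases this with h1 | h2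
      · rw [hl1] at h1
        rcases swap_moved h1 with rfl | rfl
        · exact ha1
        · exact hb1
      · by_cases hfix : lab q k x = x
        · rw [hfix] at h2
          rw [hl2] at h2
          rcases swap_moved h2 with rfl | rfl
          · exact ha2
          · exact hb2
        · rw [hl1] at hfix
          rcases swap_moved hfix with rfl | rfl
          · exact ha1
          · exact hb1
    refine ⟨a, ?_, b, ?_, hab, hswap⟩
    · apply hmoved
      rw [show lab q' (k+1) = Equiv.swap a b from hswap, Equiv.swap_apply_left]
      exact hab.symm
    · apply hmoved
      rw [show lab q' (k+1) = Equiv.swap a b from hswap, Equiv.swap_apply_right]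
      exact hab
  · -- j untouched
    have h1 : q j = q' j := hagree j hjk1
    have h2 : q (j+1) = q' (j+1) := hagree (j+1) (by omega)
    have : lab q' j = lab q j := by rw [lab, lab, h1, h2]
    rw [this]
    exact hq.2 j hj
end main

section main2
variable {n h : ℕ} {u v : Pm n}

lemma good_of_mem {E : Finset (Fin n)} {p₀ q : ℕ → Pm n} (hbase : Good E h u v p₀)
    (hq : Relation.ReflTransGen (FlipStep n h u v) p₀ q) : Good E h u v q := by
  induction hq with
  | refl => exact hbase
  | tail _ hstep ih => exact good_step ih hstep

lemma good_coset {E : Finset (Fin n)} {q : ℕ → Pm n} (hq : Good E h u v q) :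
    ∀ i, ∃ σ, Supp E σ ∧ q i = σ * u := by
  have hstep : ∀ i, i ≤ h → ∃ σ, Supp E σ ∧ q i = σ * u := by
    intro i
    induction i with
    | zero => intro _; exact ⟨1, supp_one, by rw [one_mul, hq.1.1]⟩
    | succ k ih =>
      intro hk
      obtain ⟨σ, hσ, hσk⟩ := ih (by omega)
      obtain ⟨a, ha, b, hb, hab, hl⟩ := hq.2 k (by omega)
      refine ⟨Equiv.swap a b * σ, supp_mul (supp_swap ha hb) hσ, ?_⟩
      rw [← lab_mul q k, hl, hσk, mul_assoc]
  intro i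
  rcases le_or_gt i h with hi | hi
  · exact hstep i hi
  · obtain ⟨σ, hσ, hσh⟩ := hstep h le_rfl
    refine ⟨σ, hσ, ?_⟩
    rw [hq.1.2.1 i hi.le, ← hq.1.2.1 h le_rfl, hσh]

variable {m : ℕ} {E : Finset (Fin n)}

lemma rE_path_transfer (hm : E.card = m) {q : ℕ → Pm n} (hq : Good E h u v q) :
    IsPath m h (rE n m E hm u) (rE n m E hm v) (fun j => rE n m E hm (q j)) := by
  refine ⟨by show rE n m E hm (q 0) = _; rw [hq.1.1], fun j hj => by show rE n m E hm (q j) = _; rw [hq.1.2.1 j hj], ?_⟩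
  intro i hi
  obtain ⟨a, ha, b, hb, hab, hl⟩ := hq.2 i hi
  have hqe : q (i + 1) = Equiv.swap a b * q i := by rw [← lab_mul q i, hl]
  have hedge : BEdge (q i) (Equiv.swap a b * q i) := by
    rw [← hqe]; exact hq.1.2.2 i hi
  have := (bedge_transfer hm ha hb hab (q i)).mp hedge
  rw [← hqe] at this
  exact this

lemma rE_lab_transfer (hm : E.card = m) {q : ℕ → Pm n} (hq : Good E h u v q)
    {i : ℕ} (hi : i < h) {a b : Fin n} (ha : a ∈ E) (hb : b ∈ E)
    (hl : lab q i = Equiv.swap a b) :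
    lab (fun j => rE n m E hm (q j)) i
      = Equiv.swap (eidx hm a ha) (eidx hm b hb) := by
  have hqe : q (i + 1) = Equiv.swap a b * q i := by rw [← lab_mul q i, hl]
  show rE n m E hm (q (i+1)) * (rE n m E hm (q i))⁻¹ = _
  rw [hqe, rE_swap_mul hm ha hb]
  group
end main2

section main3
variable {n h : ℕ} {u v : Pm n} {m : ℕ} {E : Finset (Fin n)}

lemma swap_pts {k : ℕ} {σ : Pm k} (hσ : σ.IsSwap) :
    ∃ z1 z2, z1 ≠ z2 ∧ σ = Equiv.swap z1 z2 ∧ σ z1 ≠ z1 ∧ σ z2 ≠ z2 := by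
  obtain ⟨z1, z2, hne, rfl⟩ := hσ
  refine ⟨z1, z2, hne, rfl, ?_, ?_⟩
  · rw [Equiv.swap_apply_left]; exact hne.symm
  · rw [Equiv.swap_apply_right]; exact hne

lemma mem_four {k : ℕ} {x A B C D : Fin k}
    (hx : (Equiv.swap C D * Equiv.swap A B) x ≠ x) : x = A ∨ x = B ∨ x = C ∨ x = D := by
  by_cases h1 : Equiv.swap A B x = x
  · rw [Equiv.Perm.mul_apply, h1] at hx
    rcases swap_moved hx with rfl | rfl
    · exact Or.inr (Or.inr (Or.inl rfl))
    · exact Or.inr (Or.inr (Or.inr rfl))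
  · rcases swap_moved h1 with rfl | rfl
    · exact Or.inl rfl
    · exact Or.inr (Or.inl rfl)

/-- forward transfer of flip steps. -/
lemma flipstep_transfer (hm : E.card = m) {q q' : ℕ → Pm n}
    (hq : Good E h u v q) (hq' : Good E h u v q')
    (hstep : FlipStep n h u v q q') :
    FlipStep m h (rE n m E hm u) (rE n m E hm v)
      (fun j => rE n m E hm (q j)) (fun j => rE n m E hm (q' j)) := by
  obtain ⟨hqp, hq'p, i, hi0, hih, hne, hagree⟩ := hstep
  refine ⟨rE_path_transfer hm hq, rE_path_transfer hm hq', i, hi0, hih, ?_, ?_⟩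
  · obtain ⟨σ, hσ, hσe⟩ := good_coset hq i
    obtain ⟨σ', hσ', hσ'e⟩ := good_coset hq' i
    intro hcon
    apply hne
    have hcon' : rE n m E hm (q i) = rE n m E hm (q' i) := hcon
    rw [hσe, hσ'e] at hcon' ⊢
    exact rE_coset_inj hm hσ hσ' hcon'
  · intro j hj
    show rE n m E hm (q j) = rE n m E hm (q' j)
    rw [hagree j hj]

/-- pullback of a flip step along `rE`. -/
lemma flipstep_pullback (hm : E.card = m) {q : ℕ → Pm n} (hq : Good E h u v q)
    {Q : ℕ → Pm m}
    (hstep : FlipStep m h (rE n m E hm u) (rE n m E hm v)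
      (fun j => rE n m E hm (q j)) Q) :
    ∃ q', FlipStep n h u v q q' ∧ Q = fun j => rE n m E hm (q' j) := by
  obtain ⟨hP, hQ, i, hi0, hih, hneQ, hagreeQ⟩ := hstep
  obtain ⟨k, rfl⟩ : ∃ k', i = k' + 1 := ⟨i - 1, (Nat.succ_pred_eq_of_pos hi0).symm⟩
  set f := rE n m E hm with hf
  have hkh : k < h := by omega
  have hQk : Q k = f (q k) := (hagreeQ k (by omega)).symm
  have hQk2 : Q (k+2) = f (q (k+2)) := (hagreeQ (k+2) (by omega)).symm
  -- labels of q
  obtain ⟨a, ha, b, hb, hab, hlab1⟩ := hq.2 k hkh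
  obtain ⟨c, hc, d, hd, hcd, hlab2⟩ := hq.2 (k+1) hih
  have hq1 : q (k+1) = Equiv.swap a b * q k := by rw [← lab_mul q k, hlab1]
  have hq2 : q (k+2) = Equiv.swap c d * q (k+1) := by rw [← lab_mul q (k+1), hlab2]
  -- the two new edge transpositions in 𝔖ₘ
  set σ := Q (k+1) * (f (q k))⁻¹ with hσdef
  set σ' := f (q (k+2)) * (Q (k+1))⁻¹ with hσ'def
  have hσQ : σ * f (q k) = Q (k+1) := by rw [hσdef, inv_mul_cancel_right]
  have hedge1 : BEdge (Q k) (Q (k+1)) := hQ.2.2 k hkh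
  have hedge2 : BEdge (Q (k+1)) (Q (k+2)) := hQ.2.2 (k+1) hih
  have hσsw : σ.IsSwap := by
    have := hedge1.1
    rwa [hQk] at this
  have hσ'sw : σ'.IsSwap := by
    have := hedge2.1
    rwa [hQk2] at this
  have hfq2 : f (q (k+2)) = Equiv.swap (eidx hm c hc) (eidx hm d hd)
      * (Equiv.swap (eidx hm a ha) (eidx hm b hb) * f (q k)) := by
    rw [hq2, hq1, hf, rE_swap_mul hm hc hd, rE_swap_mul hm ha hb]
  have hρ : σ' * σ = Equiv.swap (eidx hm c hc) (eidx hm d hd)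
      * Equiv.swap (eidx hm a ha) (eidx hm b hb) := by
    rw [hσ'def, hσdef]
    rw [hfq2]
    group
  have hρne : σ' * σ ≠ 1 := by
    intro hcon
    have h1 : f (q (k+2)) = f (q k) := by
      have : σ' * σ = f (q (k+2)) * (f (q k))⁻¹ := by
        rw [hσ'def, hσdef]; group
      rw [hcon] at this
      have := this.symm
      have h2 := congrArg (fun z => z * f (q k)) this
      simpa [inv_mul_cancel_right] using h2
    have hPpath := rE_path_transfer hm hq
    have l1 : len (f (q k)) < len (f (q (k+1))) := len_path_lt hPpath hkh
    have l2 : len (f (q (k+1))) < len (f (q (k+2))) := len_path_lt hPpath hih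
    rw [h1] at l2
    omega
  have hmoved : ∀ x : Fin m, (σ' * σ) x ≠ x → ∃ e, ∃ he : e ∈ E, x = eidx hm e he := by
    intro x hx
    rw [hρ] at hx
    rcases mem_four hx with rfl | rfl | rfl | rfl
    · exact ⟨a, ha, rfl⟩
    · exact ⟨b, hb, rfl⟩
    · exact ⟨c, hc, rfl⟩
    · exact ⟨d, hd, rfl⟩
  have hmovedσ : ∀ x : Fin m, σ x ≠ x → ∃ e, ∃ he : e ∈ E, x = eidx hm e he := by
    intro x hx
    apply hmoved
    intro hcon
    exact hx (fixed_of_prod_fixed hσsw hσ'sw hρne hcon).1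
  have hmovedσ' : ∀ x : Fin m, σ' x ≠ x → ∃ e, ∃ he : e ∈ E, x = eidx hm e he := by
    intro x hx
    apply hmoved
    intro hcon
    exact hx (fixed_of_prod_fixed hσsw hσ'sw hρne hcon).2
  obtain ⟨z1, z2, hz12, hσeq, hz1m, hz2m⟩ := swap_pts hσsw
  obtain ⟨a', ha', rfl⟩ := hmovedσ z1 hz1m
  obtain ⟨b', hb', rfl⟩ := hmovedσ z2 hz2m
  have hab' : a' ≠ b' := fun hcon => hz12 (by subst hcon; rfl)
  obtain ⟨w1, w2, hw12, hσ'eq, hw1m, hw2m⟩ := swap_pts hσ'sw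
  obtain ⟨c', hc', rfl⟩ := hmovedσ' w1 hw1m
  obtain ⟨d', hd', rfl⟩ := hmovedσ' w2 hw2m
  have hcd' : c' ≠ d' := fun hcon => hw12 (by subst hcon; rfl)
  -- the pulled-back path
  set q' : ℕ → Pm n := fun j => if j = k + 1 then Equiv.swap a' b' * q k else q j with hq'def
  have hq'ne : ∀ j, j ≠ k + 1 → q' j = q j := by
    intro j hj; rw [hq'def]; simp [hj]
  have hq'mid : q' (k+1) = Equiv.swap a' b' * q k := by rw [hq'def]; simp
  have e1 : f (q' (k+1)) = Q (k+1) := by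
    rw [hq'mid, hf, rE_swap_mul hm ha' hb', ← hσeq, ← hf, hσQ]
  -- first new edge
  have hedge1' : BEdge (q k) (q' (k+1)) := by
    rw [hq'mid]
    apply (bedge_transfer hm ha' hb' hab' (q k)).mpr
    have h2 : rE n m E hm (Equiv.swap a' b' * q k) = Q (k+1) := by rw [← hq'mid]; exact e1
    rw [h2]
    have h3 : rE n m E hm (q k) = Q k := hQk.symm
    rw [h3]
    exact hedge1
  -- identify q (k+2) with swap c' d' * q' (k+1)
  have e3 : q (k+2) = Equiv.swap c' d' * q' (k+1) := by
    obtain ⟨τ, hτ, hτe⟩ := good_coset hq k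
    have lhs_form : q (k+2) = (Equiv.swap c d * (Equiv.swap a b * τ)) * u := by
      rw [hq2, hq1, hτe]; group
    have rhs_form : Equiv.swap c' d' * q' (k+1) = (Equiv.swap c' d' * (Equiv.swap a' b' * τ)) * u := by
      rw [hq'mid, hτe]; group
    rw [lhs_form, rhs_form]
    apply rE_coset_inj hm
    · exact supp_mul (supp_swap hc hd) (supp_mul (supp_swap ha hb) hτ)
    · exact supp_mul (supp_swap hc' hd') (supp_mul (supp_swap ha' hb') hτ)
    · rw [← lhs_form, ← rhs_form]
      show f (q (k+2)) = f (Equiv.swap c' d' * q' (k+1))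
      rw [hf, rE_swap_mul hm hc' hd', ← hf, e1, ← hσ'eq, hσ'def, inv_mul_cancel_right]
  -- second new edge
  have hedge2' : BEdge (q' (k+1)) (q (k+2)) := by
    rw [e3]
    apply (bedge_transfer hm hc' hd' hcd' (q' (k+1))).mpr
    rw [show rE n m E hm (q' (k+1)) = Q (k+1) from e1]
    have : rE n m E hm (Equiv.swap c' d' * q' (k+1)) = Q (k+2) := by
      rw [← e3]; exact hQk2.symm
    rw [this]
    exact hedge2
  -- q' is a path
  have hq'path : IsPath n h u v q' := by
    refine ⟨?_, ?_, ?_⟩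
    · rw [hq'ne 0 (by omega)]; exact hq.1.1
    · intro j hj
      rw [hq'ne j (by omega)]; exact hq.1.2.1 j hj
    · intro j hj
      rcases eq_or_ne j k with rfl | hjk
      · rw [hq'ne j (by omega)]; exact hedge1'
      rcases eq_or_ne j (k+1) with rfl | hjk1
      · rw [hq'ne (k+2) (by omega)]; exact hedge2'
      · rw [hq'ne j hjk1, hq'ne (j+1) (by omega)]
        exact hq.1.2.2 j hj
  have hflip : FlipAt h (k+1) q q' := by
    refine ⟨by omega, hih, ?_, fun j hj => (hq'ne j hj).symm⟩
    intro hcon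
    apply hneQ
    show f (q (k+1)) = Q (k+1)
    rw [show q (k+1) = q' (k+1) from hcon]
    exact e1
  refine ⟨q', ⟨hq.1, hq'path, k+1, hflip⟩, ?_⟩
  funext j
  rcases eq_or_ne j (k+1) with rfl | hj
  · exact e1.symm
  · rw [hq'ne j hj]
    exact (hagreeQ j hj).symm
end main3

section main4
variable {n h : ℕ} {u v : Pm n} {m : ℕ} {E : Finset (Fin n)}

lemma fwd_orbit (hm : E.card = m) {p₀ q : ℕ → Pm n} (hbase : Good E h u v p₀)
    (hq : Relation.ReflTransGen (FlipStep n h u v) p₀ q) :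
    Relation.ReflTransGen (FlipStep m h (rE n m E hm u) (rE n m E hm v))
      (fun j => rE n m E hm (p₀ j)) (fun j => rE n m E hm (q j)) := by
  induction hq with
  | refl => exact Relation.ReflTransGen.refl
  | @tail q1 q2 hq1 hstep ih =>
    exact ih.tail (flipstep_transfer hm (good_of_mem hbase hq1)
      (good_of_mem hbase (hq1.tail hstep)) hstep)

lemma bwd_orbit (hm : E.card = m) {p₀ : ℕ → Pm n} (hbase : Good E h u v p₀)
    {Q : ℕ → Pm m}
    (hQ : Relation.ReflTransGen (FlipStep m h (rE n m E hm u) (rE n m E hm v))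
      (fun j => rE n m E hm (p₀ j)) Q) :
    ∃ q, Relation.ReflTransGen (FlipStep n h u v) p₀ q ∧
      Q = fun j => rE n m E hm (q j) := by
  induction hQ with
  | refl => exact ⟨p₀, Relation.ReflTransGen.refl, rfl⟩
  | @tail Q1 Q2 hQ1 hstep ih =>
    obtain ⟨q, hqF, rfl⟩ := ih
    obtain ⟨q', hstep', rfl⟩ :=
      flipstep_pullback hm (good_of_mem hbase hqF) hstep
    exact ⟨q', hqF.tail hstep', rfl⟩

lemma g_swap (hm : E.card = m) {a b : Fin n} (ha : a ∈ E) (hb : b ∈ E) (z : Pm n) :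
    rE n m E hm (Equiv.swap a b * z) * (rE n m E hm z)⁻¹
      = Equiv.swap (eidx hm a ha) (eidx hm b hb) := by
  rw [rE_swap_mul hm ha hb]; group

theorem exists_small_iso {F : Set (ℕ → Pm n)} (hF : IsFlipclass n h u v F) :
    ∃ m : ℕ, m ≤ 2 * h ∧ ∃ (u' v' : Pm m) (F' : Set (ℕ → Pm m)),
      IsFlipclass m h u' v' F' ∧ FlipclassIso n m h F F' := by
  classical
  obtain ⟨p₀, hp₀, rfl⟩ := hF
  set E : Finset (Fin n) := (Finset.range h).biUnion
      (fun i => Finset.univ.filter fun x => lab p₀ i x ≠ x) with hE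
  have hbase : Good E h u v p₀ := good_base hp₀
  set m := E.card with hmdef
  have hm : E.card = m := rfl
  set f : Pm n → Pm m := rE n m E hm with hfdef
  set g : Pm n → Pm m := fun s => f (s * u) * (f u)⁻¹ with hgdef
  set F' : Set (ℕ → Pm m) :=
    {Q | Relation.ReflTransGen (FlipStep m h (f u) (f v)) (fun j => f (p₀ j)) Q} with hF'def
  refine ⟨m, card_good_E hp₀, f u, f v, F', ⟨fun j => f (p₀ j), rE_path_transfer hm hbase, rfl⟩, ?_⟩
  have hgood : ∀ q ∈ {q | Relation.ReflTransGen (FlipStep n h u v) p₀ q}, Good E h u v q :=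
    fun q hq => good_of_mem hbase hq
  have hmemF' : ∀ q ∈ {q | Relation.ReflTransGen (FlipStep n h u v) p₀ q},
      (fun j => f (q j)) ∈ F' := fun q hq => fwd_orbit hm hbase hq
  have hinj : ∀ q ∈ {q | Relation.ReflTransGen (FlipStep n h u v) p₀ q},
      ∀ q' ∈ {q | Relation.ReflTransGen (FlipStep n h u v) p₀ q},
      ∀ i i', f (q i) = f (q' i') → q i = q' i' := by
    intro q hq q' hq' i i' hcon
    obtain ⟨σ, hσ, hσe⟩ := good_coset (hgood q hq) i
    obtain ⟨σ', hσ', hσ'e⟩ := good_coset (hgood q' hq') i'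
    rw [hσe, hσ'e] at hcon ⊢
    exact rE_coset_inj hm hσ hσ' hcon
  refine ⟨f, g, ⟨?_, ?_, ?_⟩, ⟨?_, ?_, ?_⟩, ?_, ⟨?_, ?_, ?_⟩, ?_, ?_⟩
  · -- SV mapsTo
    rintro w ⟨q, hq, i, hi, rfl⟩
    exact ⟨fun j => f (q j), hmemF' q hq, i, hi, rfl⟩
  · -- SV injOn
    rintro w ⟨q, hq, i, hi, rfl⟩ w' ⟨q', hq', i', hi', rfl⟩ hcon
    exact hinj q hq q' hq' i i' hcon
  · -- SV surjOn
    rintro z ⟨Q, hQ, i, hi, rfl⟩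
    obtain ⟨q, hq, rfl⟩ := bwd_orbit hm hbase hQ
    exact ⟨q i, ⟨q, hq, i, hi, rfl⟩, rfl⟩
  · -- F mapsTo
    intro q hq
    exact hmemF' q hq
  · -- F injOn
    intro q hq q' hq' hcon
    funext j
    exact hinj q hq q' hq' j j (congrFun hcon j)
  · -- F surjOn
    intro Q hQ
    obtain ⟨q, hq, rfl⟩ := bwd_orbit hm hbase hQ
    exact ⟨q, hq, rfl⟩
  · -- flips preserved
    intro q hq q' hq' i ⟨hi0, hih, hne, hagree⟩
    refine ⟨hi0, hih, ?_, ?_⟩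
    · intro hcon
      exact hne (hinj q hq q' hq' i i hcon)
    · intro j hj
      show f (q j) = f (q' j)
      rw [hagree j hj]
  · -- labelSet mapsTo
    rintro s ⟨q, hq, i, hi, rfl⟩
    obtain ⟨a, ha, b, hb, hab, hl⟩ := (hgood q hq).2 i hi
    refine ⟨fun j => f (q j), hmemF' q hq, i, hi, ?_⟩
    rw [hl]
    show lab (fun j => f (q j)) i = g (Equiv.swap a b)
    rw [rE_lab_transfer hm (hgood q hq) hi ha hb hl]
    rw [hgdef]
    exact (g_swap hm ha hb u).symm
  · -- labelSet injOn
    rintro s ⟨q, hq, i, hi, rfl⟩ t ⟨q', hq', i', hi', rfl⟩ hcon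
    obtain ⟨a, ha, b, hb, hab, hl⟩ := (hgood q hq).2 i hi
    obtain ⟨c, hc, d, hd, hcd, hl'⟩ := (hgood q' hq').2 i' hi'
    have : f (lab q i * u) = f (lab q' i' * u) := by
      have := hcon
      rw [hgdef] at this
      exact mul_right_cancel this
    have heq : lab q i * u = lab q' i' * u := by
      rw [hl, hl'] at this ⊢
      exact rE_coset_inj hm (supp_swap ha hb) (supp_swap hc hd) this
    exact mul_right_cancel heq
  · -- labelSet surjOn
    rintro t ⟨Q, hQ, i, hi, rfl⟩
    obtain ⟨q, hq, rfl⟩ := bwd_orbit hm hbase hQ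
    obtain ⟨a, ha, b, hb, hab, hl⟩ := (hgood q hq).2 i hi
    refine ⟨lab q i, ⟨q, hq, i, hi, rfl⟩, ?_⟩
    rw [rE_lab_transfer hm (hgood q hq) hi ha hb hl]
    rw [hgdef, hl]
    exact g_swap hm ha hb u
  · -- labels match
    intro q hq i hi
    obtain ⟨a, ha, b, hb, hab, hl⟩ := (hgood q hq).2 i hi
    show g (lab q i) = lab (fun j => f (q j)) i
    rw [rE_lab_transfer hm (hgood q hq) hi ha hb hl]
    rw [hgdef, hl]
    exact g_swap hm ha hb u
  · -- lex order preserved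
    intro s t hs ht hlex
    obtain ⟨q, hq, i, hi, rfl⟩ := hs
    obtain ⟨q', hq', i', hi', rfl⟩ := ht
    obtain ⟨a, ha, b, hb, hab, hl⟩ := (hgood q hq).2 i hi
    obtain ⟨c, hc, d, hd, hcd, hl'⟩ := (hgood q' hq').2 i' hi'
    -- sorted representations with letters in E
    obtain ⟨a1, b1, ha1, hb1, hab1, hl1⟩ :
        ∃ a1 b1, a1 ∈ E ∧ b1 ∈ E ∧ a1 < b1 ∧ lab q i = Equiv.swap a1 b1 := by
      rcases hab.lt_or_gt with hlt | hlt
      · exact ⟨a, b, ha, hb, hlt, hl⟩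
      · exact ⟨b, a, hb, ha, hlt, by rw [hl, Equiv.swap_comm]⟩
    obtain ⟨c1, d1, hc1, hd1, hcd1, hl1'⟩ :
        ∃ c1 d1, c1 ∈ E ∧ d1 ∈ E ∧ c1 < d1 ∧ lab q' i' = Equiv.swap c1 d1 := by
      rcases hcd.lt_or_gt with hlt | hlt
      · exact ⟨c, d, hc, hd, hlt, hl'⟩
      · exact ⟨d, c, hd, hc, hlt, by rw [hl', Equiv.swap_comm]⟩
    obtain ⟨a0, b0, c0, d0, hab0, hcd0, hseq, hteq, hcmp⟩ := hlex
    have h1 : a0 = a1 ∧ b0 = b1 := by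
      apply swap_pair_eq hab0 hab1
      rw [← hseq, hl1]
    have h2 : c0 = c1 ∧ d0 = d1 := by
      apply swap_pair_eq hcd0 hcd1
      rw [← hteq, hl1']
    obtain ⟨rfl, rfl⟩ := h1
    obtain ⟨rfl, rfl⟩ := h2
    refine ⟨eidx hm a0 ha1, eidx hm b0 hb1, eidx hm c0 hc1, eidx hm d0 hd1,
      (eidx_lt_iff hm ha1 hb1).mpr hab0, (eidx_lt_iff hm hc1 hd1).mpr hcd0, ?_, ?_, ?_⟩
    · rw [hgdef, hl1]
      exact g_swap hm ha1 hb1 u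
    · rw [hgdef, hl1']
      exact g_swap hm hc1 hd1 u
    · rcases hcmp with hlt | ⟨heq, hle⟩
      · exact Or.inl ((eidx_lt_iff hm ha1 hc1).mpr hlt)
      · refine Or.inr ⟨?_, ?_⟩
        · subst heq; rfl
        · rcases eq_or_lt_of_le hle with heq2 | hlt2
          · subst heq2; rfl
          · exact ((eidx_lt_iff hm hb1 hd1).mpr hlt2).le
end main4

section finiteness

lemma paths_finite (m h : ℕ) : {p : ℕ → Pm m | ∃ u v : Pm m, IsPath m h u v p}.Finite := by
  classical
  apply Set.Finite.of_finite_image (f := fun p => fun i : Fin (h+1) => p i)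
  · exact Set.Finite.subset Set.finite_univ (Set.subset_univ _)
  · rintro p ⟨up, vp, hp⟩ p' ⟨up', vp', hp'⟩ heq
    have hval : ∀ j : ℕ, j ≤ h → p j = p' j := by
      intro j hj
      exact congrFun heq ⟨j, by omega⟩
    funext j
    rcases le_or_gt j h with hj | hj
    · exact hval j hj
    · have h1 : p j = vp := hp.2.1 j hj.le
      have h2 : p h = vp := hp.2.1 h le_rfl
      have h3 : p' j = vp' := hp'.2.1 j hj.le
      have h4 : p' h = vp' := hp'.2.1 h le_rfl
      rw [h1, ← h2, h3, ← h4]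
      exact hval h le_rfl

lemma flipclasses_finite (m h : ℕ) :
    {x : Pm m × Pm m × Set (ℕ → Pm m) | IsFlipclass m h x.1 x.2.1 x.2.2}.Finite := by
  classical
  have hD : {z : Pm m × Pm m × (ℕ → Pm m) | IsPath m h z.1 z.2.1 z.2.2}.Finite := by
    apply Set.Finite.subset
      (Set.Finite.prod Set.finite_univ
        (Set.Finite.prod Set.finite_univ (paths_finite m h)))
    rintro ⟨u, v, p⟩ hz
    exact ⟨Set.mem_univ _, Set.mem_univ _, u, v, hz⟩
  apply Set.Finite.subset (hD.image (fun z =>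
    (z.1, z.2.1, {q | Relation.ReflTransGen (FlipStep m h z.1 z.2.1) z.2.2 q})))
  rintro ⟨u, v, F⟩ ⟨p, hp, hF⟩
  exact ⟨(u, v, p), hp, by simp [hF.symm]⟩

lemma reps_finite (h : ℕ) :
    {x : Σ n : ℕ, Pm n × Pm n × Set (ℕ → Pm n) |
      x.1 ≤ 2 * h ∧ IsFlipclass x.1 h x.2.1 x.2.2.1 x.2.2.2}.Finite := by
  classical
  apply Set.Finite.subset
    (Set.Finite.biUnion (Set.finite_Iic (2 * h)) (fun m _ =>
      ((flipclasses_finite m h).image (Sigma.mk m))))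
  rintro ⟨mm, y⟩ ⟨hle, hfc⟩
  exact Set.mem_biUnion hle ⟨y, hfc, rfl⟩
end finiteness

/-- Corollary: for fixed `h`, there are finitely many isomorphism classes of
`h`-flipclasses (over all symmetric groups `𝔖ₙ`). -/
theorem finitely_many_flipclasses (h : ℕ) :
    ∃ k : ℕ, ∃ reps : Fin k → (Σ n : ℕ, Pm n × Pm n × Set (ℕ → Pm n)),
      (∀ j, IsFlipclass (reps j).1 h (reps j).2.1 (reps j).2.2.1 (reps j).2.2.2) ∧
      ∀ (n : ℕ) (u v : Pm n) (F : Set (ℕ → Pm n)), IsFlipclass n h u v F →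
        ∃ j, FlipclassIso n (reps j).1 h F (reps j).2.2.2 := by
  classical
  obtain hS := reps_finite h
  set l := hS.toFinset.toList with hl
  refine ⟨l.length, fun j => l.get j, ?_, ?_⟩
  · intro j
    have hmem : l.get j ∈ hS.toFinset :=
      Finset.mem_toList.mp (List.get_mem l j)
    have := (Set.Finite.mem_toFinset hS).mp hmem
    exact this.2
  · intro n u v F hF
    obtain ⟨m, hm2h, u', v', F', hfc', hiso⟩ := exists_small_iso hF
    have hmemS : (⟨m, (u', v', F')⟩ : Σ n : ℕ, Pm n × Pm n × Set (ℕ → Pm n)) ∈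
        hS.toFinset := (Set.Finite.mem_toFinset hS).mpr ⟨hm2h, hfc'⟩
    have hmeml : (⟨m, (u', v', F')⟩ : Σ n : ℕ, Pm n × Pm n × Set (ℕ → Pm n)) ∈ l :=
      Finset.mem_toList.mpr hmemS
    obtain ⟨j, hj⟩ := List.mem_iff_get.mp hmeml
    refine ⟨j, ?_⟩
    show FlipclassIso n (l.get j).1 h F (l.get j).2.2.2
    rw [hj]
    exact hiso
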